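/- Let G be a finite simple graph. Then G is basic if and only if no connected component of G is bipartite (a connected component is bipartite if its vertex set can be partitioned into two parts such that every edge of the component joins a vertex of one part to a vertex of the other). -/

import Mathlib

/-- A finite simple graph `G` is *basic* if for every assignment `b` of real numbers to
the vertices there exists an assignment `x` of real numbers to the edges such that for
each vertex the number at that vertex equals the sum of the numbers on its incident edges. -/
def GraphBasic {V : Type} [Fintype V] [DecidableEq V]
    (G : SimpleGraph V) [DecidableRel G.Adj] : Prop :=
  ∀ b : V → ℝ, ∃ x : G.edgeSet → ℝ,
    ∀ v : V, (∑ e : G.edgeSet, if v ∈ (e : Sym2 V) then x e else 0) = b v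

/-- A connected component `C` of `G` is *bipartite* if the vertices of the component can
be two-colored so that every edge of the component joins vertices of different colors. -/
def ComponentBipartite {V : Type} (G : SimpleGraph V) (C : G.ConnectedComponent) : Prop :=
  ∃ f : V → Bool, ∀ u w : V, G.connectedComponentMk u = C → G.Adj u w → f u ≠ f w

lemma sum_ite_mem_sym2 {V : Type} [Fintype V] [DecidableEq V] {u w : V} (h : u ≠ w)
    (g : V → ℝ) : (∑ v : V, if v ∈ s(u, w) then g v else 0) = g u + g w := by
  classical
  have hfil : (Finset.univ.filter (fun v => v ∈ s(u, w))) = {u, w} := by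
    ext v; simp [Sym2.mem_iff]
  rw [← Finset.sum_filter, hfil, Finset.sum_pair h]

/-- A finite simple graph is basic iff no connected component of it is bipartite. -/
theorem basic_iff_no_bipartite_component {V : Type} [Fintype V] [DecidableEq V]
    (G : SimpleGraph V) [DecidableRel G.Adj] :
    GraphBasic G ↔ ∀ C : G.ConnectedComponent, ¬ ComponentBipartite G C := by
  classical
  constructor
  · -- basic → no bipartite component
    intro hB C hCbip
    obtain ⟨f, hf⟩ := hCbip
    obtain ⟨v0, hv0⟩ := C.exists_rep
    set y : V → ℝ := fun u =>
      if G.connectedComponentMk u = C then (if f u then 1 else -1) else 0 with hy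
    obtain ⟨x, hx⟩ := hB y
    have hzero : ∀ (e : Sym2 V), e ∈ G.edgeSet → ∀ c : ℝ,
        (∑ v : V, if v ∈ e then y v * c else 0) = 0 := by
      intro e
      induction e using Sym2.ind with
      | _ u w =>
        intro he c
        rw [SimpleGraph.mem_edgeSet] at he
        rw [sum_ite_mem_sym2 he.ne]
        have hcomp : G.connectedComponentMk u = G.connectedComponentMk w :=
          SimpleGraph.ConnectedComponent.sound he.reachable
        by_cases hu : G.connectedComponentMk u = C
        · have hw : G.connectedComponentMk w = C := hcomp ▸ hu
          have hne := hf u w hu he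
          simp only [hy, hu, hw, if_pos]
          rcases Bool.eq_false_or_eq_true (f u) with h1 | h1 <;>
            rcases Bool.eq_false_or_eq_true (f w) with h2 | h2 <;>
              simp [h1, h2] at hne ⊢
        · have hw : ¬ G.connectedComponentMk w = C := fun h => hu (hcomp.trans h)
          simp [hy, hu, hw]
    have key : (∑ v : V, y v * y v) = 0 := by
      have h1 : (∑ v : V, y v * y v)
          = ∑ v : V, y v * (∑ e : G.edgeSet, if v ∈ (e : Sym2 V) then x e else 0) := by
        refine Finset.sum_congr rfl fun v _ => ?_
        rw [hx v]
      rw [h1]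
      have h2 : (∑ v : V, y v * (∑ e : G.edgeSet, if v ∈ (e : Sym2 V) then x e else 0))
          = ∑ e : G.edgeSet, ∑ v : V, (if v ∈ (e : Sym2 V) then y v * x e else 0) := by
        simp_rw [Finset.mul_sum, mul_ite, mul_zero]
        exact Finset.sum_comm
      rw [h2]
      refine Finset.sum_eq_zero fun e _ => hzero e.1 e.2 (x e)
    have hpos : (0 : ℝ) < ∑ v : V, y v * y v := by
      have h0 : y v0 * y v0 = 1 := by
        have hc : G.connectedComponentMk v0 = C := hv0
        rcases Bool.eq_false_or_eq_true (f v0) with h1 | h1 <;> simp [hy, hc, h1]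
      have hle : y v0 * y v0 ≤ ∑ v : V, y v * y v :=
        Finset.single_le_sum (fun v _ => mul_self_nonneg (y v)) (Finset.mem_univ v0)
      linarith
    linarith
  · -- no bipartite component → basic
    intro hnb
    set A : Matrix V G.edgeSet ℝ :=
      fun v e => if v ∈ (e : Sym2 V) then 1 else 0 with hA
    -- edge values of the transpose map
    have hedge_sum : ∀ (y : V → ℝ), A.transpose.mulVec y = 0 →
        ∀ u w : V, G.Adj u w → y u + y w = 0 := by
      intro y hy u w hadj
      have he : s(u, w) ∈ G.edgeSet := (SimpleGraph.mem_edgeSet G).2 hadj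
      have := congrFun hy ⟨s(u, w), he⟩
      simp only [Matrix.mulVec, dotProduct, Matrix.transpose_apply, hA,
        Pi.zero_apply, Matrix.transpose, Matrix.of_apply] at this
      rw [← this]
      rw [show (∑ v : V, (if v ∈ s(u, w) then (1:ℝ) else 0) * y v)
          = ∑ v : V, (if v ∈ s(u, w) then y v else 0) from
        Finset.sum_congr rfl fun v _ => by split <;> simp]
      rw [sum_ite_mem_sym2 hadj.ne]
    have hinj : Function.Injective A.transpose.mulVecLin := by
      rw [← LinearMap.ker_eq_bot, LinearMap.ker_eq_bot']
      intro y hy0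
      have hy : A.transpose.mulVec y = 0 := hy0
      have hedge := hedge_sum y hy
      funext v
      by_contra hv
      have hv : y v ≠ 0 := hv
      -- along a walk, nonvanishing propagates
      have step : ∀ {a b : V} (_ : G.Walk a b), y a ≠ 0 → y b ≠ 0 := by
        intro a b p
        induction p with
        | nil => exact id
        | cons h _ ih =>
          intro ha
          apply ih
          have := hedge _ _ h
          intro h0
          apply ha
          linarith
      refine hnb (G.connectedComponentMk v) ⟨fun u => decide (0 < y u), ?_⟩
      intro u w hu hadj hfeq
      have hreach : G.Reachable v u :=
        (SimpleGraph.ConnectedComponent.exact hu).symm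
      have hyu : y u ≠ 0 := step hreach.some hv
      have hyw : y w = -y u := by have := hedge u w hadj; linarith
      rw [decide_eq_decide] at hfeq
      rcases hyu.lt_or_gt with h | h
      · have : ¬ (0 < y u) := not_lt.2 h.le
        have : 0 < y w := by rw [hyw]; linarith
        tauto
      · have : ¬ (0 < y w) := by rw [hyw]; intro hc; linarith
        tauto
    -- rank argument: A.mulVec is surjective
    have hsurj : Function.Surjective A.mulVecLin := by
      rw [← LinearMap.range_eq_top]
      have hrk : A.transpose.rank = Fintype.card V := by
        rw [Matrix.rank, LinearMap.finrank_range_of_inj hinj,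
          Module.finrank_fintype_fun_eq_card]
      have hrk2 : A.rank = Fintype.card V := by
        rw [← Matrix.rank_transpose, hrk]
      apply Submodule.eq_top_of_finrank_eq
      rw [← Matrix.rank] at *
      rw [hrk2, Module.finrank_fintype_fun_eq_card]
    intro b
    obtain ⟨x, hxb⟩ := hsurj b
    refine ⟨x, fun v => ?_⟩
    have := congrFun (show A.mulVec x = b from hxb) v
    simp only [Matrix.mulVec, dotProduct, hA] at this
    rw [← this]
    exact Finset.sum_congr rfl fun e _ => by split <;> simp
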